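/- Let {S_i}_{i∈I} be a finite family of communicating systems over pairwise disjoint participant sets, let H = {h_i}_{i∈I} be a set of interfaces for it such that every interface h_i has no mixed states, let CM be a connection model for H, and let K be a connection policy for H complying with CM. If every S_i (i ∈ I) satisfies the progress property and K satisfies the progress property, then the multicomposition MC({S_i}_{i∈I}, K) satisfies the progress property. -/

import Mathlib

namespace CFSM

/-- Direction of a communication action: output (`!`) or input (`?`). -/
inductive Dir : Type where
  | out : Dir
  | inp : Dir
deriving DecidableEq

instance instFintypeDir : Fintype Dir :=
  ⟨{Dir.out, Dir.inp}, fun x => by cases x <;> simp⟩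

/-- An action `pq!a` (output) or `pq?a` (input) over participants `P` and messages `A`:
`snd` is the sender `p`, `rcv` the receiver `q`, `msg` the message `a`. -/
structure Act (P : Type) (A : Type) : Type where
  snd : P
  rcv : P
  dir : Dir
  msg : A

instance {P A : Type} [Finite P] [Finite A] : Finite (Act P A) :=
  Finite.of_injective (fun l => (l.snd, l.rcv, l.dir, l.msg))
    (fun a b h => by
      cases a; cases b
      simp only [Prod.mk.injEq] at h
      obtain ⟨h1, h2, h3, h4⟩ := h
      subst h1; subst h2; subst h3; subst h4; rfl)

/-- The subject of an action: the sender of an output, the receiver of an input. -/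
def Act.subject {P A : Type} (l : Act P A) : P :=
  match l.dir with
  | .out => l.snd
  | .inp => l.rcv

/-- A communicating system over participants `P` and messages `A`:
one machine (state type, initial state and transition relation) per participant. -/
structure CS (P : Type) (A : Type) : Type 1 where
  St : P → Type
  init : ∀ p, St p
  delta : ∀ p, Set (St p × Act P A × St p)

/-- All actions of the machine of participant `p` have subject `p`
(the name of the machine) and distinct endpoints. -/
def CS.WellFormed {P A : Type} (S : CS P A) : Prop :=
  ∀ p t, t ∈ S.delta p → ((t.2.1 : Act P A).subject = p ∧ t.2.1.snd ≠ t.2.1.rcv)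

/-- A configuration: a local state for each machine and a FIFO buffer
for each ordered pair of participants. -/
structure Config {P A : Type} (S : CS P A) : Type where
  st : ∀ p, S.St p
  ch : P → P → List A

/-- The initial configuration: all machines in their initial state, all channels empty. -/
def CS.initConfig {P A : Type} (S : CS P A) : Config S :=
  ⟨S.init, fun _ _ => []⟩

/-- The labelled transition relation between configurations. -/
def StepL {P A : Type} (S : CS P A) (c : Config S) (l : Act P A) (c' : Config S) : Prop :=
  match l.dir with
  | .out =>
      (c.st l.snd, l, c'.st l.snd) ∈ S.delta l.snd ∧
      (∀ p, p ≠ l.snd → c'.st p = c.st p) ∧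
      c'.ch l.snd l.rcv = c.ch l.snd l.rcv ++ [l.msg] ∧
      (∀ p q, (p, q) ≠ (l.snd, l.rcv) → c'.ch p q = c.ch p q)
  | .inp =>
      (c.st l.rcv, l, c'.st l.rcv) ∈ S.delta l.rcv ∧
      (∀ p, p ≠ l.rcv → c'.st p = c.st p) ∧
      c.ch l.snd l.rcv = l.msg :: c'.ch l.snd l.rcv ∧
      (∀ p q, (p, q) ≠ (l.snd, l.rcv) → c'.ch p q = c.ch p q)

/-- Unlabelled transition relation. -/
def Step {P A : Type} (S : CS P A) (c c' : Config S) : Prop :=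
  ∃ l, StepL S c l c'

/-- Reachability between configurations. -/
def Reach {P A : Type} (S : CS P A) : Config S → Config S → Prop :=
  Relation.ReflTransGen (Step S)

/-- The set of configurations reachable from the initial configuration. -/
def RC {P A : Type} (S : CS P A) : Set (Config S) :=
  {c | Reach S S.initConfig c}

/-- A local state is final if it has no outgoing transition. -/
def FinalSt {Q P A : Type} (δ : Set (Q × Act P A × Q)) (q : Q) : Prop :=
  ∀ l q', (q, l, q') ∉ δ

/-- A local state is receiving if it is not final and all its outgoing
transitions are labelled with input actions. -/
def ReceivingSt {Q P A : Type} (δ : Set (Q × Act P A × Q)) (q : Q) : Prop :=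
  (∃ l q', (q, l, q') ∈ δ) ∧ ∀ l q', (q, l, q') ∈ δ → (l : Act P A).dir = Dir.inp

/-- A local state is mixed if it has at least one outgoing output-labelled
transition and at least one outgoing input-labelled transition. -/
def MixedSt {Q P A : Type} (δ : Set (Q × Act P A × Q)) (q : Q) : Prop :=
  (∃ l q', (q, l, q') ∈ δ ∧ (l : Act P A).dir = Dir.out) ∧
  (∃ l q', (q, l, q') ∈ δ ∧ (l : Act P A).dir = Dir.inp)

/-- A machine has no mixed states. -/
def NoMixed {Q P A : Type} (δ : Set (Q × Act P A × Q)) : Prop :=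
  ∀ q, ¬ MixedSt δ q

/-- Deadlock configuration: all channels empty but all machines in receiving states. -/
def DeadlockConfig {P A : Type} (S : CS P A) (c : Config S) : Prop :=
  (∀ p q, c.ch p q = []) ∧ ∀ p, ReceivingSt (S.delta p) (c.st p)

def DeadlockFree {P A : Type} (S : CS P A) : Prop :=
  ∀ c ∈ RC S, ¬ DeadlockConfig S c

/-- Orphan-message configuration: all machines final but some channel nonempty. -/
def OrphanConfig {P A : Type} (S : CS P A) (c : Config S) : Prop :=
  (∀ p, FinalSt (S.delta p) (c.st p)) ∧ ∃ p q, c.ch p q ≠ []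

def OrphanFree {P A : Type} (S : CS P A) : Prop :=
  ∀ c ∈ RC S, ¬ OrphanConfig S c

/-- Unspecified reception configuration: some machine `r` is in a receiving state and,
for every input transition of `r`, the corresponding channel is nonempty with a
first element different from the expected message. -/
def URConfig {P A : Type} (S : CS P A) (c : Config S) : Prop :=
  ∃ r, ReceivingSt (S.delta r) (c.st r) ∧
    ∀ s a q', (c.st r, Act.mk s r Dir.inp a, q') ∈ S.delta r →
      (c.ch s r ≠ [] ∧ ¬ ∃ w, c.ch s r = a :: w)

def ReceptionErrorFree {P A : Type} (S : CS P A) : Prop :=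
  ∀ c ∈ RC S, ¬ URConfig S c

/-- Progress: every reachable configuration has an outgoing transition or all
machines are in final states. -/
def ProgressProp {P A : Type} (S : CS P A) : Prop :=
  ∀ c ∈ RC S, (∃ c', Step S c c') ∨ ∀ p, FinalSt (S.delta p) (c.st p)

/-- `p`-lock configuration: `p` is in a receiving state and never occurs as the
subject of an action in any transition sequence from `c`. -/
def PLockConfig {P A : Type} (S : CS P A) (c : Config S) (p : P) : Prop :=
  ReceivingSt (S.delta p) (c.st p) ∧
  ∀ c1 l c2, Reach S c c1 → StepL S c1 l c2 → l.subject ≠ p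

def LockFree {P A : Type} (S : CS P A) : Prop :=
  ∀ c ∈ RC S, ∀ p, ¬ PLockConfig S c p

section Composition

variable {I : Type} {P : I → Type} {A : Type}

/-- Messages occurring in input actions of the machine of `p`. -/
def inMsgs {Pp A : Type} (S : CS Pp A) (p : Pp) : Set A :=
  {a | ∃ q s q', (q, Act.mk s p Dir.inp a, q') ∈ S.delta p}

/-- Messages occurring in output actions of the machine of `p`. -/
def outMsgs {Pp A : Type} (S : CS Pp A) (p : Pp) : Set A :=
  {a | ∃ q r q', (q, Act.mk p r Dir.out a, q') ∈ S.delta p}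

/-- `CM` is a connection model for the interfaces `hh i` of the family `S`
(the interface `h_i` is represented by its index `i`). -/
def IsConnModel (S : ∀ i, CS (P i) A) (hh : ∀ i, P i) (CM : Set (I × A × I)) : Prop :=
  ∀ i a,
    (a ∈ inMsgs (S i) (hh i) →
      ∃ j, j ≠ i ∧ a ∈ outMsgs (S j) (hh j) ∧ (i, a, j) ∈ CM) ∧
    (a ∈ outMsgs (S i) (hh i) →
      ∃ j, j ≠ i ∧ a ∈ inMsgs (S j) (hh j) ∧ (j, a, i) ∈ CM)

/-- `CM` is a strong connection model: additionally the connecting partner is unique. -/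
def IsStrongConnModel (S : ∀ i, CS (P i) A) (hh : ∀ i, P i) (CM : Set (I × A × I)) : Prop :=
  IsConnModel S hh CM ∧
  ∀ i a,
    (a ∈ inMsgs (S i) (hh i) → ∃! j, (i, a, j) ∈ CM) ∧
    (a ∈ outMsgs (S i) (hh i) → ∃! j, (j, a, i) ∈ CM)

/-- Conditions (*) and (**) for a candidate transition relation `d` of the local
connection policy of interface `hh i` (the name `k_i` is represented by `i`). -/
def PolicySat (S : ∀ i, CS (P i) A) (hh : ∀ i, P i) (CM : Set (I × A × I)) (i : I)
    (d : Set ((S i).St (hh i) × Act I A × (S i).St (hh i))) : Prop :=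
  (∀ q r a q', (q, Act.mk r (hh i) Dir.inp a, q') ∈ (S i).delta (hh i) →
      ∃ j, j ≠ i ∧ (i, a, j) ∈ CM ∧ (q, Act.mk i j Dir.out a, q') ∈ d) ∧
  (∀ q r a q', (q, Act.mk (hh i) r Dir.out a, q') ∈ (S i).delta (hh i) →
      ∃ j, j ≠ i ∧ (j, a, i) ∈ CM ∧ (q, Act.mk j i Dir.inp a, q') ∈ d)

/-- `d` belongs to the local connection policy set `IS(M_{h_i}, CM)`:
it is a minimal relation satisfying (*) and (**).  (The states `q̇` of the
policy machine are identified with the states `q` of `M_{h_i}`.) -/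
def InIS (S : ∀ i, CS (P i) A) (hh : ∀ i, P i) (CM : Set (I × A × I)) (i : I)
    (d : Set ((S i).St (hh i) × Act I A × (S i).St (hh i))) : Prop :=
  PolicySat S hh CM i d ∧ ∀ d', d' ⊆ d → PolicySat S hh CM i d' → d' = d

/-- The communicating system (over the participant type `I` of names `k_i`)
determined by the family of transition relations `Kd` of a connection policy. -/
def policyCS (S : ∀ i, CS (P i) A) (hh : ∀ i, P i)
    (Kd : ∀ i, Set ((S i).St (hh i) × Act I A × (S i).St (hh i))) : CS I A where
  St := fun i => (S i).St (hh i)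
  init := fun i => (S i).init (hh i)
  delta := Kd

/-- `Kd` is a connection policy for the interfaces `hh` complying with `CM`. -/
def IsConnPolicy (S : ∀ i, CS (P i) A) (hh : ∀ i, P i) (CM : Set (I × A × I))
    (Kd : ∀ i, Set ((S i).St (hh i) × Act I A × (S i).St (hh i))) : Prop :=
  ∀ i, InIS S hh CM i (Kd i)

/-- States of the gateway for interface `hh i`: the original states plus one
fresh state per transition of `M_{h_i}`. -/
abbrev GWState (S : ∀ i, CS (P i) A) (hh : ∀ i, P i) (i : I) : Type :=
  (S i).St (hh i) ⊕ ((S i).St (hh i) × Act (P i) A × (S i).St (hh i))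

/-- Lifting of a local action of system `i` to the composed participant type. -/
def liftAct (i : I) (l : Act (P i) A) : Act ((j : I) × P j) A :=
  Act.mk ⟨i, l.snd⟩ ⟨i, l.rcv⟩ l.dir l.msg

/-- Transition relation of the gateway `M_{h_i} ⟲ M_{k_i}`. -/
def GWdelta (S : ∀ i, CS (P i) A) (hh : ∀ i, P i)
    (Kd : ∀ i, Set ((S i).St (hh i) × Act I A × (S i).St (hh i))) (i : I) :
    Set (GWState S hh i × Act ((j : I) × P j) A × GWState S hh i) :=
  {x | ∃ q a q',
    (∃ s r, (q, Act.mk (hh i) s Dir.out a, q') ∈ (S i).delta (hh i) ∧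
        (q, Act.mk r i Dir.inp a, q') ∈ Kd i ∧
        (x = (Sum.inl q, Act.mk ⟨r, hh r⟩ ⟨i, hh i⟩ Dir.inp a,
              Sum.inr (q, Act.mk (hh i) s Dir.out a, q')) ∨
         x = (Sum.inr (q, Act.mk (hh i) s Dir.out a, q'),
              Act.mk ⟨i, hh i⟩ ⟨i, s⟩ Dir.out a, Sum.inl q'))) ∨
    (∃ s r, (q, Act.mk s (hh i) Dir.inp a, q') ∈ (S i).delta (hh i) ∧
        (q, Act.mk i r Dir.out a, q') ∈ Kd i ∧
        (x = (Sum.inl q, Act.mk ⟨i, s⟩ ⟨i, hh i⟩ Dir.inp a,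
              Sum.inr (q, Act.mk s (hh i) Dir.inp a, q')) ∨
         x = (Sum.inr (q, Act.mk s (hh i) Dir.inp a, q'),
              Act.mk ⟨i, hh i⟩ ⟨r, hh r⟩ Dir.out a, Sum.inl q')))}

open Classical in
/-- State type of the machine of participant `⟨i, p⟩` in the multicomposition:
the gateway state type if `p` is the interface of system `i`, the original
state type otherwise. -/
noncomputable def MCSt (S : ∀ i, CS (P i) A) (hh : ∀ i, P i) (x : (i : I) × P i) : Type :=
  if x.2 = hh x.1 then GWState S hh x.1 else (S x.1).St x.2

/-- The multicomposition `MC({S_i}, K)`: all machines of the single systems,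
with the machine of each interface `hh i` replaced by its gateway. -/
noncomputable def MC (S : ∀ i, CS (P i) A) (hh : ∀ i, P i)
    (Kd : ∀ i, Set ((S i).St (hh i) × Act I A × (S i).St (hh i))) :
    CS ((i : I) × P i) A where
  St := MCSt S hh
  init := fun x => by
    by_cases hp : x.2 = hh x.1
    · have h : MCSt S hh x = GWState S hh x.1 := by simp [MCSt, hp]
      rw [h]; exact Sum.inl ((S x.1).init (hh x.1))
    · have h : MCSt S hh x = (S x.1).St x.2 := by simp [MCSt, hp]
      rw [h]; exact (S x.1).init x.2
  delta := fun x => by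
    by_cases hp : x.2 = hh x.1
    · have h : MCSt S hh x = GWState S hh x.1 := by simp [MCSt, hp]
      rw [h]; exact GWdelta S hh Kd x.1
    · have h : MCSt S hh x = (S x.1).St x.2 := by simp [MCSt, hp]
      rw [h]
      exact {t | ∃ q l q', (q, l, q') ∈ (S x.1).delta x.2 ∧ t = (q, liftAct x.1 l, q')}

/-- The state of the gateway of interface `hh i` in a configuration of the
multicomposition, as an element of `GWState`. -/
noncomputable def toGW (S : ∀ i, CS (P i) A) (hh : ∀ i, P i) (i : I)
    (x : MCSt S hh ⟨i, hh i⟩) : GWState S hh i :=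
  cast (by simp [MCSt]) x

/-- The state of a non-interface participant in a configuration of the
multicomposition, as an element of its original state type. -/
noncomputable def toLoc (S : ∀ i, CS (P i) A) (hh : ∀ i, P i) {i : I} {p : P i}
    (hp : p ≠ hh i) (x : MCSt S hh ⟨i, p⟩) : (S i).St p :=
  cast (by simp [MCSt, hp]) x

/-- Projection of a configuration of the multicomposition to system `S i`,
assuming the gateway state of `hh i` is not a fresh intermediate state
(i.e. it is of the form `Sum.inl q`). -/
noncomputable def projSys (S : ∀ i, CS (P i) A) (hh : ∀ i, P i)
    (Kd : ∀ i, Set ((S i).St (hh i) × Act I A × (S i).St (hh i)))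
    (i : I) (s : Config (MC S hh Kd))
    (hq : ∃ q, toGW S hh i (s.st ⟨i, hh i⟩) = Sum.inl q) : Config (S i) where
  st := fun p => by
    by_cases hp : p = hh i
    · rw [hp]; exact hq.choose
    · exact toLoc S hh hp (s.st ⟨i, p⟩)
  ch := fun p q => s.ch ⟨i, p⟩ ⟨i, q⟩

/-- Projection of a configuration of the multicomposition to the connection
policy `K`, assuming no gateway is in a fresh intermediate state. -/
noncomputable def projPolicy (S : ∀ i, CS (P i) A) (hh : ∀ i, P i)
    (Kd : ∀ i, Set ((S i).St (hh i) × Act I A × (S i).St (hh i)))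
    (s : Config (MC S hh Kd))
    (hq : ∀ i, ∃ q, toGW S hh i (s.st ⟨i, hh i⟩) = Sum.inl q) :
    Config (policyCS S hh Kd) where
  st := fun i => (hq i).choose
  ch := fun i j => s.ch ⟨i, hh i⟩ ⟨j, hh j⟩

end Composition

end CFSM
open CFSM

section
variable {I : Type} {P : I → Type} {A : Type}
variable (S : ∀ i, CS (P i) A) (hh : ∀ i, P i)
variable (Kd : ∀ i, Set ((S i).St (hh i) × Act I A × (S i).St (hh i)))

lemma MCSt_int (i : I) : MCSt S hh ⟨i, hh i⟩ = GWState S hh i := by simp [MCSt]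

lemma MCSt_loc {i : I} {p : P i} (hp : p ≠ hh i) : MCSt S hh ⟨i, p⟩ = (S i).St p := by
  simp [MCSt, hp]

lemma MC_delta_int (i : I) : HEq ((MC S hh Kd).delta ⟨i, hh i⟩) (GWdelta S hh Kd i) := by
  unfold MC
  simp only []
  split
  · exact cast_heq _ _
  · exact absurd trivial (by assumption)

lemma MC_delta_loc {i : I} {p : P i} (hp : p ≠ hh i) :
    HEq ((MC S hh Kd).delta ⟨i, p⟩)
      {t : (S i).St p × Act ((j : I) × P j) A × (S i).St p |
        ∃ q l q', (q, l, q') ∈ (S i).delta p ∧ t = (q, liftAct i l, q')} := by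
  unfold MC
  simp only []
  split
  · exact absurd (by assumption) hp
  · exact cast_heq _ _

lemma MC_init_int (i : I) :
    HEq ((MC S hh Kd).init ⟨i, hh i⟩) (Sum.inl ((S i).init (hh i)) : GWState S hh i) := by
  unfold MC
  simp only []
  split
  · exact cast_heq _ _
  · exact absurd trivial (by assumption)

lemma MC_init_loc {i : I} {p : P i} (hp : p ≠ hh i) :
    HEq ((MC S hh Kd).init ⟨i, p⟩) ((S i).init p) := by
  unfold MC
  simp only []
  split
  · exact absurd (by assumption) hp
  · exact cast_heq _ _

end

section
variable {I : Type} {P : I → Type} {A : Type}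
variable (S : ∀ i, CS (P i) A) (hh : ∀ i, P i)
variable (Kd : ∀ i, Set ((S i).St (hh i) × Act I A × (S i).St (hh i)))

noncomputable def ofGW (i : I) (x : GWState S hh i) : MCSt S hh ⟨i, hh i⟩ :=
  cast (MCSt_int S hh i).symm x

noncomputable def ofLoc {i : I} {p : P i} (hp : p ≠ hh i) (x : (S i).St p) :
    MCSt S hh ⟨i, p⟩ :=
  cast (MCSt_loc S hh hp).symm x

lemma toGW_ofGW (i : I) (x : GWState S hh i) : toGW S hh i (ofGW S hh i x) = x :=
  eq_of_heq ((cast_heq _ _).trans (cast_heq _ _))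

lemma ofGW_toGW (i : I) (x : MCSt S hh ⟨i, hh i⟩) : ofGW S hh i (toGW S hh i x) = x :=
  eq_of_heq ((cast_heq _ _).trans (cast_heq _ _))

lemma toLoc_ofLoc {i : I} {p : P i} (hp : p ≠ hh i) (x : (S i).St p) :
    toLoc S hh hp (ofLoc S hh hp x) = x :=
  eq_of_heq ((cast_heq _ _).trans (cast_heq _ _))

lemma ofLoc_toLoc {i : I} {p : P i} (hp : p ≠ hh i) (x : MCSt S hh ⟨i, p⟩) :
    ofLoc S hh hp (toLoc S hh hp x) = x :=
  eq_of_heq ((cast_heq _ _).trans (cast_heq _ _))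

lemma mem_of_heq {α β L : Type} (h : α = β) {D : Set (α × L × α)} {G : Set (β × L × β)}
    (hDG : HEq D G) (x y : α) (l : L) :
    (x, l, y) ∈ D ↔ (cast h x, l, cast h y) ∈ G := by
  subst h
  rw [eq_of_heq hDG]
  simp

lemma mem_delta_int {i : I} {x y : (MC S hh Kd).St ⟨i, hh i⟩} {l : Act ((j : I) × P j) A} :
    (x, l, y) ∈ (MC S hh Kd).delta ⟨i, hh i⟩ ↔
      (toGW S hh i x, l, toGW S hh i y) ∈ GWdelta S hh Kd i :=
  mem_of_heq (α := (MC S hh Kd).St ⟨i, hh i⟩) (MCSt_int S hh i) (MC_delta_int S hh Kd i) x y l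

lemma mem_delta_loc {i : I} {p : P i} (hp : p ≠ hh i) {x y : (MC S hh Kd).St ⟨i, p⟩}
    {l : Act ((j : I) × P j) A} :
    (x, l, y) ∈ (MC S hh Kd).delta ⟨i, p⟩ ↔
      ∃ l0, (toLoc S hh hp x, l0, toLoc S hh hp y) ∈ (S i).delta p ∧ l = liftAct i l0 := by
  rw [mem_of_heq (α := (MC S hh Kd).St ⟨i, p⟩) (MCSt_loc S hh hp) (MC_delta_loc S hh Kd hp)]
  constructor
  · rintro ⟨q, l0, q', hm, heq⟩
    rw [Prod.mk.injEq, Prod.mk.injEq] at heq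
    obtain ⟨h1, h2, h3⟩ := heq
    subst h1; subst h3; subst h2
    exact ⟨l0, hm, rfl⟩
  · rintro ⟨l0, hm, rfl⟩
    exact ⟨_, l0, _, hm, rfl⟩

lemma gwst_init (i : I) :
    toGW S hh i ((MC S hh Kd).initConfig.st ⟨i, hh i⟩) = Sum.inl ((S i).init (hh i)) :=
  eq_of_heq ((cast_heq _ _).trans (MC_init_int S hh Kd i))

lemma locst_init {i : I} {p : P i} (hp : p ≠ hh i) :
    toLoc S hh hp ((MC S hh Kd).initConfig.st ⟨i, p⟩) = (S i).init p :=
  eq_of_heq ((cast_heq _ _).trans (MC_init_loc S hh Kd hp))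

end

section
variable {I : Type} {P : I → Type} {A : Type}
variable (S : ∀ i, CS (P i) A) (hh : ∀ i, P i)
variable (Kd : ∀ i, Set ((S i).St (hh i) × Act I A × (S i).St (hh i)))

lemma Config.ext' {Pp A : Type} {T : CS Pp A} {c c' : Config T}
    (h1 : ∀ p, c.st p = c'.st p) (h2 : ∀ p q, c.ch p q = c'.ch p q) : c = c' := by
  cases c; cases c'
  simp only [Config.mk.injEq]
  exact ⟨funext h1, funext fun p => funext (h2 p)⟩

lemma RC_step {Pp A : Type} {T : CS Pp A} {c c' : Config T} (hc : c ∈ RC T)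
    (h : Step T c c') : c' ∈ RC T :=
  Relation.ReflTransGen.tail hc h

lemma Kd_shape {CM : Set (I × A × I)} (hK : IsConnPolicy S hh CM Kd) (i : I)
    {q q' : (S i).St (hh i)} {l : Act I A} (ht : (q, l, q') ∈ Kd i) :
    (∃ j a, l = Act.mk i j Dir.out a ∧ j ≠ i ∧
      ∃ r, (q, Act.mk r (hh i) Dir.inp a, q') ∈ (S i).delta (hh i)) ∨
    (∃ j a, l = Act.mk j i Dir.inp a ∧ j ≠ i ∧
      ∃ r, (q, Act.mk (hh i) r Dir.out a, q') ∈ (S i).delta (hh i)) := by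
  by_contra hC
  have hsub : Kd i \ {(q, l, q')} ⊆ Kd i := Set.diff_subset
  have hsat : PolicySat S hh CM i (Kd i \ {(q, l, q')}) := by
    constructor
    · intro q0 r a q0' hm
      obtain ⟨j, hj, hcm, hd⟩ := (hK i).1.1 q0 r a q0' hm
      refine ⟨j, hj, hcm, hd, ?_⟩
      intro hEq
      rw [Set.mem_singleton_iff, Prod.mk.injEq, Prod.mk.injEq] at hEq
      obtain ⟨e1, e2, e3⟩ := hEq
      subst e1; subst e3; subst e2
      exact hC (Or.inl ⟨j, a, rfl, hj, r, hm⟩)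
    · intro q0 r a q0' hm
      obtain ⟨j, hj, hcm, hd⟩ := (hK i).1.2 q0 r a q0' hm
      refine ⟨j, hj, hcm, hd, ?_⟩
      intro hEq
      rw [Set.mem_singleton_iff, Prod.mk.injEq, Prod.mk.injEq] at hEq
      obtain ⟨e1, e2, e3⟩ := hEq
      subst e1; subst e3; subst e2
      exact hC (Or.inr ⟨j, a, rfl, hj, r, hm⟩)
  have heq := (hK i).2 _ hsub hsat
  have : (q, l, q') ∈ Kd i \ {(q, l, q')} := by rw [heq]; exact ht
  exact this.2 rfl

noncomputable def gwst (c : Config (MC S hh Kd)) (i : I) : GWState S hh i :=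
  toGW S hh i (c.st ⟨i, hh i⟩)

noncomputable def sigmaSt (c : Config (MC S hh Kd)) (i : I) : (S i).St (hh i) :=
  match gwst S hh Kd c i with
  | .inl q => q
  | .inr (q, l, q') => match l.dir with | .out => q | .inp => q'

noncomputable def kappaSt (c : Config (MC S hh Kd)) (i : I) : (S i).St (hh i) :=
  match gwst S hh Kd c i with
  | .inl q => q
  | .inr (q, l, q') => match l.dir with | .out => q' | .inp => q

open Classical in
noncomputable def dcomp (c : Config (MC S hh Kd)) (i : I) : Config (S i) where
  st := fun p =>
    if hp : p = hh i then cast (congrArg (S i).St hp.symm) (sigmaSt S hh Kd c i)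
    else toLoc S hh hp (c.st ⟨i, p⟩)
  ch := fun p q => c.ch ⟨i, p⟩ ⟨i, q⟩

noncomputable def kcomp (c : Config (MC S hh Kd)) : Config (policyCS S hh Kd) where
  st := kappaSt S hh Kd c
  ch := fun i j => c.ch ⟨i, hh i⟩ ⟨j, hh j⟩

lemma dcomp_st_int (c : Config (MC S hh Kd)) (i : I) :
    (dcomp S hh Kd c i).st (hh i) = sigmaSt S hh Kd c i := by
  unfold dcomp
  simp only []
  split
  · exact eq_of_heq (cast_heq _ _)
  · exact absurd trivial (by assumption)

lemma dcomp_st_ne (c : Config (MC S hh Kd)) (i : I) {p : P i} (hp : p ≠ hh i) :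
    (dcomp S hh Kd c i).st p = toLoc S hh hp (c.st ⟨i, p⟩) := by
  unfold dcomp
  simp only []
  split
  · exact absurd (by assumption) hp
  · rfl

lemma dcomp_ch (c : Config (MC S hh Kd)) (i : I) (p q : P i) :
    (dcomp S hh Kd c i).ch p q = c.ch ⟨i, p⟩ ⟨i, q⟩ := rfl

lemma kcomp_st (c : Config (MC S hh Kd)) (i : I) :
    (kcomp S hh Kd c).st i = kappaSt S hh Kd c i := rfl

lemma kcomp_ch (c : Config (MC S hh Kd)) (i j : I) :
    (kcomp S hh Kd c).ch i j = c.ch ⟨i, hh i⟩ ⟨j, hh j⟩ := rfl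

def GWvalid (c : Config (MC S hh Kd)) : Prop :=
  ∀ i, (∃ q, gwst S hh Kd c i = Sum.inl q) ∨
    ∃ t, gwst S hh Kd c i = Sum.inr t ∧ t ∈ (S i).delta (hh i)

def MCInv (c : Config (MC S hh Kd)) : Prop :=
  GWvalid S hh Kd c ∧ (∀ i, dcomp S hh Kd c i ∈ RC (S i)) ∧
    kcomp S hh Kd c ∈ RC (policyCS S hh Kd)

lemma dcomp_eq {c c' : Config (MC S hh Kd)} {i : I}
    (hsig : sigmaSt S hh Kd c' i = sigmaSt S hh Kd c i)
    (hst : ∀ p : P i, p ≠ hh i → c'.st ⟨i, p⟩ = c.st ⟨i, p⟩)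
    (hch : ∀ p q : P i, c'.ch ⟨i, p⟩ ⟨i, q⟩ = c.ch ⟨i, p⟩ ⟨i, q⟩) :
    dcomp S hh Kd c' i = dcomp S hh Kd c i := by
  apply Config.ext'
  · intro p
    by_cases hp : p = hh i
    · subst hp; rw [dcomp_st_int, dcomp_st_int, hsig]
    · rw [dcomp_st_ne S hh Kd c' i hp, dcomp_st_ne S hh Kd c i hp, hst p hp]
  · intro p q
    exact hch p q

lemma kcomp_eq {c c' : Config (MC S hh Kd)}
    (hk : ∀ i, kappaSt S hh Kd c' i = kappaSt S hh Kd c i)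
    (hch : ∀ i j, c'.ch ⟨i, hh i⟩ ⟨j, hh j⟩ = c.ch ⟨i, hh i⟩ ⟨j, hh j⟩) :
    kcomp S hh Kd c' = kcomp S hh Kd c := by
  apply Config.ext'
  · exact hk
  · exact hch

lemma exists_step_of_out {Pp B : Type} {T : CS Pp B} {c : Config T} {l : Act Pp B}
    (hdir : l.dir = Dir.out) (y : T.St l.snd)
    (hmem : (c.st l.snd, l, y) ∈ T.delta l.snd) : ∃ c', Step T c c' := by
  classical
  refine ⟨⟨Function.update c.st l.snd y,
    fun p q => if (p, q) = (l.snd, l.rcv) then c.ch p q ++ [l.msg] else c.ch p q⟩, l, ?_⟩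
  obtain ⟨ls, lr, ld, lm⟩ := l
  cases ld
  case inp => simp at hdir
  case out =>
    refine ⟨?_, ?_, ?_, ?_⟩
    · simpa [Function.update_self] using hmem
    · intro p hp; exact Function.update_of_ne hp _ _
    · simp
    · intro p q hpq; simp only [if_neg hpq]

lemma exists_step_of_inp {Pp B : Type} {T : CS Pp B} {c : Config T} {l : Act Pp B}
    (hdir : l.dir = Dir.inp) (y : T.St l.rcv)
    (hmem : (c.st l.rcv, l, y) ∈ T.delta l.rcv) (w : List B)
    (hch : c.ch l.snd l.rcv = l.msg :: w) : ∃ c', Step T c c' := by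
  classical
  refine ⟨⟨Function.update c.st l.rcv y,
    fun p q => if (p, q) = (l.snd, l.rcv) then w else c.ch p q⟩, l, ?_⟩
  obtain ⟨ls, lr, ld, lm⟩ := l
  cases ld
  case out => simp at hdir
  case inp =>
    refine ⟨?_, ?_, ?_, ?_⟩
    · simpa [Function.update_self] using hmem
    · intro p hp; exact Function.update_of_ne hp _ _
    · simpa using hch
    · intro p q hpq; simp only [if_neg hpq]

end

section
variable {I : Type} {P : I → Type} {A : Type}
variable (S : ∀ i, CS (P i) A) (hh : ∀ i, P i)
variable (Kd : ∀ i, Set ((S i).St (hh i) × Act I A × (S i).St (hh i)))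

lemma sigma_fst_eq {i j : I} {p : P i} {q : P j}
    (h : (⟨i, p⟩ : (k : I) × P k) = ⟨j, q⟩) : i = j :=
  congrArg Sigma.fst h

lemma sigma_snd_eq {i : I} {p q : P i}
    (h : (⟨i, p⟩ : (k : I) × P k) = ⟨i, q⟩) : p = q := by
  have := (Sigma.mk.inj_iff.mp h).2
  exact eq_of_heq this

lemma sigma_ne_of_fst {i j : I} {p : P i} {q : P j} (h : i ≠ j) :
    (⟨i, p⟩ : (k : I) × P k) ≠ ⟨j, q⟩ :=
  fun he => h (sigma_fst_eq he)

lemma sigma_ne_of_snd {i : I} {p q : P i} (h : p ≠ q) :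
    (⟨i, p⟩ : (k : I) × P k) ≠ ⟨i, q⟩ :=
  fun he => h (sigma_snd_eq he)

lemma sigma_hh_ne {i j : I} {p : P i} (hp : p ≠ hh i) :
    (⟨j, hh j⟩ : (k : I) × P k) ≠ ⟨i, p⟩ := by
  intro he
  obtain ⟨h1, h2⟩ := Sigma.mk.inj_iff.mp he
  subst h1
  exact hp (eq_of_heq h2).symm

lemma pair_ne_of_fst {α : Type} {x x' y y' : α} (h : x ≠ x') : (x, y) ≠ (x', y') :=
  fun he => h (congrArg Prod.fst he)

lemma pair_ne_of_snd {α : Type} {x x' y y' : α} (h : y ≠ y') : (x, y) ≠ (x', y') :=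
  fun he => h (congrArg Prod.snd he)

lemma pair_ne_lift {i : I} {p q p' q' : P i} (h : (p, q) ≠ (p', q')) :
    ((⟨i, p⟩ : (k : I) × P k), (⟨i, q⟩ : (k : I) × P k)) ≠ (⟨i, p'⟩, ⟨i, q'⟩) := by
  intro he
  apply h
  rw [Prod.mk.injEq] at he ⊢
  exact ⟨sigma_snd_eq he.1, sigma_snd_eq he.2⟩

lemma pair_ne_hh {p q p' q' : I} (h : (p, q) ≠ (p', q')) :
    ((⟨p, hh p⟩ : (k : I) × P k), (⟨q, hh q⟩ : (k : I) × P k)) ≠ (⟨p', hh p'⟩, ⟨q', hh q'⟩) := by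
  intro he
  apply h
  rw [Prod.mk.injEq] at he ⊢
  exact ⟨sigma_fst_eq he.1, sigma_fst_eq he.2⟩

lemma gwst_congr {c c' : Config (MC S hh Kd)} (i : I)
    (h : c'.st ⟨i, hh i⟩ = c.st ⟨i, hh i⟩) : gwst S hh Kd c' i = gwst S hh Kd c i :=
  congrArg _ h

lemma sigmaSt_congr {c c' : Config (MC S hh Kd)} {i : I}
    (h : gwst S hh Kd c' i = gwst S hh Kd c i) :
    sigmaSt S hh Kd c' i = sigmaSt S hh Kd c i := by
  unfold sigmaSt; rw [h]

lemma kappaSt_congr {c c' : Config (MC S hh Kd)} {i : I}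
    (h : gwst S hh Kd c' i = gwst S hh Kd c i) :
    kappaSt S hh Kd c' i = kappaSt S hh Kd c i := by
  unfold kappaSt; rw [h]

lemma sigmaSt_inl {c : Config (MC S hh Kd)} {i : I} {q : (S i).St (hh i)}
    (h : gwst S hh Kd c i = Sum.inl q) : sigmaSt S hh Kd c i = q := by
  unfold sigmaSt; rw [h]

lemma kappaSt_inl {c : Config (MC S hh Kd)} {i : I} {q : (S i).St (hh i)}
    (h : gwst S hh Kd c i = Sum.inl q) : kappaSt S hh Kd c i = q := by
  unfold kappaSt; rw [h]

lemma sigmaSt_out {c : Config (MC S hh Kd)} {i : I} {q q' : (S i).St (hh i)}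
    {s r : P i} {a : A}
    (h : gwst S hh Kd c i = Sum.inr (q, Act.mk s r Dir.out a, q')) :
    sigmaSt S hh Kd c i = q := by
  unfold sigmaSt; rw [h]

lemma sigmaSt_inp {c : Config (MC S hh Kd)} {i : I} {q q' : (S i).St (hh i)}
    {s r : P i} {a : A}
    (h : gwst S hh Kd c i = Sum.inr (q, Act.mk s r Dir.inp a, q')) :
    sigmaSt S hh Kd c i = q' := by
  unfold sigmaSt; rw [h]

lemma kappaSt_out {c : Config (MC S hh Kd)} {i : I} {q q' : (S i).St (hh i)}
    {s r : P i} {a : A}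
    (h : gwst S hh Kd c i = Sum.inr (q, Act.mk s r Dir.out a, q')) :
    kappaSt S hh Kd c i = q' := by
  unfold kappaSt; rw [h]

lemma kappaSt_inp {c : Config (MC S hh Kd)} {i : I} {q q' : (S i).St (hh i)}
    {s r : P i} {a : A}
    (h : gwst S hh Kd c i = Sum.inr (q, Act.mk s r Dir.inp a, q')) :
    kappaSt S hh Kd c i = q := by
  unfold kappaSt; rw [h]

lemma Inv_init : MCInv S hh Kd (MC S hh Kd).initConfig := by
  have hgw : ∀ i, gwst S hh Kd (MC S hh Kd).initConfig i = Sum.inl ((S i).init (hh i)) :=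
    fun i => gwst_init S hh Kd i
  refine ⟨fun i => Or.inl ⟨_, hgw i⟩, fun i => ?_, ?_⟩
  · have hd : dcomp S hh Kd (MC S hh Kd).initConfig i = (S i).initConfig := by
      apply Config.ext'
      · intro p
        by_cases hp : p = hh i
        · subst hp
          rw [dcomp_st_int, sigmaSt_inl S hh Kd (hgw i)]
          rfl
        · rw [dcomp_st_ne S hh Kd _ i hp]
          exact locst_init S hh Kd hp
      · intro p q; rfl
    rw [hd]; exact Relation.ReflTransGen.refl
  · have hkk : kcomp S hh Kd (MC S hh Kd).initConfig = (policyCS S hh Kd).initConfig := by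
      apply Config.ext'
      · intro i
        rw [kcomp_st, kappaSt_inl S hh Kd (hgw i)]
        rfl
      · intro p q; rfl
    rw [hkk]; exact Relation.ReflTransGen.refl

end

section
variable {I : Type} {P : I → Type} {A : Type}
variable (S : ∀ i, CS (P i) A) (hh : ∀ i, P i)
variable (Kd : ∀ i, Set ((S i).St (hh i) × Act I A × (S i).St (hh i)))

lemma Inv_step (hwf : ∀ i, (S i).WellFormed) {CM : Set (I × A × I)}
    (hK : IsConnPolicy S hh CM Kd)
    {c c' : Config (MC S hh Kd)} (hc : MCInv S hh Kd c)
    (h : Step (MC S hh Kd) c c') : MCInv S hh Kd c' := by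
  obtain ⟨hval, hd, hk⟩ := hc
  obtain ⟨l, hl⟩ := h
  obtain ⟨⟨is, ps⟩, ⟨ir, pr⟩, ld, a⟩ := l
  cases ld
  -- ================== OUTPUT CASE ==================
  case out =>
    obtain ⟨hmem, hst, hch1, hch2⟩ := hl
    by_cases hps : ps = hh is
    · -- gateway output
      subst hps
      rw [mem_delta_int S hh Kd] at hmem
      obtain ⟨q, a0, q', hcl⟩ := hmem
      rcases hcl with ⟨s, r, hdel, hkd, hx | hx⟩ | ⟨s, r, hdel, hkd, hx | hx⟩
      · -- form 1: input action, contradiction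
        rw [Prod.mk.injEq, Prod.mk.injEq] at hx
        obtain ⟨hg, hact, hg'⟩ := hx
        simp at hact
      · -- form 2: gateway forwards into its own system (system renamed `ir`)
        rw [Prod.mk.injEq, Prod.mk.injEq] at hx
        obtain ⟨hg, hact, hg'⟩ := hx
        injection hact with e1 e2 e3 e4
        subst e4
        injection e2 with f1 f2
        subst f1
        have f2' := eq_of_heq f2; subst f2'
        have hshh : pr ≠ hh ir := fun he => (hwf ir (hh ir) _ hdel).2 (by rw [he])
        refine ⟨?_, ?_, ?_⟩
        · intro j
          by_cases hj : j = ir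
          · rw [hj]; exact Or.inl ⟨q', hg'⟩
          · rw [gwst_congr S hh Kd j (hst _ (sigma_ne_of_fst hj))]
            exact hval j
        · intro j
          by_cases hj : j = ir
          · rw [hj]
            refine RC_step (hd ir) ⟨Act.mk (hh ir) pr Dir.out a, ?_, ?_, ?_, ?_⟩
            · rw [dcomp_st_int, dcomp_st_int, sigmaSt_out S hh Kd hg, sigmaSt_inl S hh Kd hg']
              exact hdel
            · intro p hp
              rw [dcomp_st_ne S hh Kd c' ir hp, dcomp_st_ne S hh Kd c ir hp]
              exact congrArg _ (hst _ (sigma_ne_of_snd hp))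
            · rw [dcomp_ch, dcomp_ch]; exact hch1
            · intro p pq hpq
              rw [dcomp_ch, dcomp_ch]
              exact hch2 _ _ (pair_ne_lift hpq)
          · rw [dcomp_eq S hh Kd (sigmaSt_congr S hh Kd
                (gwst_congr S hh Kd j (hst _ (sigma_ne_of_fst hj))))
                (fun p hp => hst _ (sigma_ne_of_fst hj))
                (fun p pq => hch2 _ _ (pair_ne_of_fst (sigma_ne_of_fst hj)))]
            exact hd j
        · rw [kcomp_eq S hh Kd ?_ ?_]
          · exact hk
          · intro j
            by_cases hj : j = ir
            · rw [hj]
              rw [kappaSt_inl S hh Kd hg', kappaSt_out S hh Kd hg]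
            · exact kappaSt_congr S hh Kd (gwst_congr S hh Kd j (hst _ (sigma_ne_of_fst hj)))
          · intro j j'
            exact hch2 _ _ (pair_ne_of_snd (sigma_hh_ne hh hshh))
      · -- form 3: input action, contradiction
        rw [Prod.mk.injEq, Prod.mk.injEq] at hx
        obtain ⟨hg, hact, hg'⟩ := hx
        simp at hact
      · -- form 4: gateway `is` sends to gateway `ir` (policy output)
        rw [Prod.mk.injEq, Prod.mk.injEq] at hx
        obtain ⟨hg, hact, hg'⟩ := hx
        injection hact with e1 e2 e3 e4
        subst e4
        injection e2 with f1 f2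
        subst f1
        have f2' := eq_of_heq f2; subst f2'
        have hris : ir ≠ is := by
          rcases Kd_shape S hh Kd hK is hkd with ⟨j, b, he, hj, _⟩ | ⟨j, b, he, hj, _⟩
          · injection he with g1 g2 g3 g4; subst g2; exact hj
          · injection he with g1 g2 g3 g4; simp at g3
        refine ⟨?_, ?_, ?_⟩
        · intro j
          by_cases hj : j = is
          · rw [hj]; exact Or.inl ⟨q', hg'⟩
          · rw [gwst_congr S hh Kd j (hst _ (sigma_ne_of_fst hj))]
            exact hval j
        · intro j
          by_cases hj : j = is
          · rw [hj]
            rw [dcomp_eq S hh Kd ?_ (fun p hp => hst _ (sigma_ne_of_snd hp)) ?_]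
            · exact hd is
            · rw [sigmaSt_inl S hh Kd hg', sigmaSt_inp S hh Kd hg]
            · intro p pq
              exact hch2 _ _ (pair_ne_of_snd (sigma_ne_of_fst (Ne.symm hris)))
          · rw [dcomp_eq S hh Kd (sigmaSt_congr S hh Kd
                (gwst_congr S hh Kd j (hst _ (sigma_ne_of_fst hj))))
                (fun p hp => hst _ (sigma_ne_of_fst hj))
                (fun p pq => hch2 _ _ (pair_ne_of_fst (sigma_ne_of_fst hj)))]
            exact hd j
        · refine RC_step hk ⟨Act.mk is ir Dir.out a, ?_, ?_, ?_, ?_⟩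
          · show ((kcomp S hh Kd c).st is, _, (kcomp S hh Kd c').st is) ∈ Kd is
            rw [kcomp_st, kcomp_st, kappaSt_inp S hh Kd hg, kappaSt_inl S hh Kd hg']
            exact hkd
          · intro j hj
            rw [kcomp_st, kcomp_st]
            exact kappaSt_congr S hh Kd (gwst_congr S hh Kd j (hst _ (sigma_ne_of_fst hj)))
          · rw [kcomp_ch, kcomp_ch]; exact hch1
          · intro j j' hjj
            rw [kcomp_ch, kcomp_ch]
            exact hch2 _ _ (pair_ne_hh hh hjj)
    · -- non-interface output (system renamed `ir`)
      rw [mem_delta_loc S hh Kd hps] at hmem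
      obtain ⟨l0, hm0, hlift⟩ := hmem
      obtain ⟨l0s, l0r, l0d, l0m⟩ := l0
      injection hlift with e1 e2 e3 e4
      subst e3; subst e4
      injection e1 with f1 f2
      subst f2
      injection e2 with g1 g2
      subst g1
      have g2' := eq_of_heq g2; subst g2'
      have hstunch : ∀ j : I, c'.st ⟨j, hh j⟩ = c.st ⟨j, hh j⟩ := by
        intro j
        apply hst
        exact sigma_hh_ne hh hps
      refine ⟨?_, ?_, ?_⟩
      · intro j
        rw [gwst_congr S hh Kd j (hstunch j)]
        exact hval j
      · intro j
        by_cases hj : j = ir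
        · rw [hj]
          refine RC_step (hd ir) ⟨Act.mk ps pr Dir.out a, ?_, ?_, ?_, ?_⟩
          · rw [dcomp_st_ne S hh Kd c' ir hps, dcomp_st_ne S hh Kd c ir hps]
            exact hm0
          · intro p hp
            by_cases hph : p = hh ir
            · subst hph
              rw [dcomp_st_int, dcomp_st_int]
              exact sigmaSt_congr S hh Kd (gwst_congr S hh Kd ir (hstunch ir))
            · rw [dcomp_st_ne S hh Kd c' ir hph, dcomp_st_ne S hh Kd c ir hph]
              exact congrArg _ (hst _ (sigma_ne_of_snd hp))
          · rw [dcomp_ch, dcomp_ch]; exact hch1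
          · intro p pq hpq
            rw [dcomp_ch, dcomp_ch]
            exact hch2 _ _ (pair_ne_lift hpq)
        · rw [dcomp_eq S hh Kd (sigmaSt_congr S hh Kd
              (gwst_congr S hh Kd j (hstunch j)))
              (fun p hp => hst _ (sigma_ne_of_fst hj))
              (fun p pq => hch2 _ _ (pair_ne_of_fst (sigma_ne_of_fst hj)))]
          exact hd j
      · rw [kcomp_eq S hh Kd
          (fun j => kappaSt_congr S hh Kd (gwst_congr S hh Kd j (hstunch j)))
          (fun j j' => hch2 _ _ (pair_ne_of_fst (sigma_hh_ne hh hps)))]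
        exact hk
  -- ================== INPUT CASE ==================
  case inp =>
    obtain ⟨hmem, hst, hch1, hch2⟩ := hl
    by_cases hpr : pr = hh ir
    · -- gateway input
      subst hpr
      rw [mem_delta_int S hh Kd] at hmem
      obtain ⟨q, a0, q', hcl⟩ := hmem
      rcases hcl with ⟨s, r, hdel, hkd, hx | hx⟩ | ⟨s, r, hdel, hkd, hx | hx⟩
      · -- form 1: gateway `ir` receives from gateway `is` (policy input)
        rw [Prod.mk.injEq, Prod.mk.injEq] at hx
        obtain ⟨hg, hact, hg'⟩ := hx
        injection hact with e1 e2 e3 e4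
        subst e4
        injection e1 with f1 f2
        subst f1
        have f2' := eq_of_heq f2; subst f2'
        have hisir : is ≠ ir := by
          rcases Kd_shape S hh Kd hK ir hkd with ⟨j, b, he, hj, _⟩ | ⟨j, b, he, hj, _⟩
          · injection he with g1 g2 g3 g4; simp at g3
          · injection he with g1 g2 g3 g4; subst g1; exact hj
        refine ⟨?_, ?_, ?_⟩
        · intro j
          by_cases hj : j = ir
          · rw [hj]; exact Or.inr ⟨_, hg', hdel⟩
          · rw [gwst_congr S hh Kd j (hst _ (sigma_ne_of_fst hj))]
            exact hval j
        · intro j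
          by_cases hj : j = ir
          · rw [hj]
            rw [dcomp_eq S hh Kd ?_ (fun p hp => hst _ (sigma_ne_of_snd hp)) ?_]
            · exact hd ir
            · rw [sigmaSt_out S hh Kd hg', sigmaSt_inl S hh Kd hg]
            · intro p pq
              exact hch2 _ _ (pair_ne_of_fst (sigma_ne_of_fst (Ne.symm hisir)))
          · rw [dcomp_eq S hh Kd (sigmaSt_congr S hh Kd
                (gwst_congr S hh Kd j (hst _ (sigma_ne_of_fst hj))))
                (fun p hp => hst _ (sigma_ne_of_fst hj))
                (fun p pq => hch2 _ _ (pair_ne_of_snd (sigma_ne_of_fst hj)))]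
            exact hd j
        · refine RC_step hk ⟨Act.mk is ir Dir.inp a, ?_, ?_, ?_, ?_⟩
          · show ((kcomp S hh Kd c).st ir, _, (kcomp S hh Kd c').st ir) ∈ Kd ir
            rw [kcomp_st, kcomp_st, kappaSt_inl S hh Kd hg, kappaSt_out S hh Kd hg']
            exact hkd
          · intro j hj
            rw [kcomp_st, kcomp_st]
            exact kappaSt_congr S hh Kd (gwst_congr S hh Kd j (hst _ (sigma_ne_of_fst hj)))
          · rw [kcomp_ch, kcomp_ch]; exact hch1
          · intro j j' hjj
            rw [kcomp_ch, kcomp_ch]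
            exact hch2 _ _ (pair_ne_hh hh hjj)
      · -- form 2: output action, contradiction
        rw [Prod.mk.injEq, Prod.mk.injEq] at hx
        obtain ⟨hg, hact, hg'⟩ := hx
        simp at hact
      · -- form 3: gateway receives from inside its own system (system renamed `is`)
        rw [Prod.mk.injEq, Prod.mk.injEq] at hx
        obtain ⟨hg, hact, hg'⟩ := hx
        injection hact with e1 e2 e3 e4
        subst e4
        injection e1 with f1 f2
        subst f1
        have f2' := eq_of_heq f2; subst f2'
        have hshh : ps ≠ hh is := fun he => (hwf is (hh is) _ hdel).2 (by rw [he])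
        refine ⟨?_, ?_, ?_⟩
        · intro j
          by_cases hj : j = is
          · rw [hj]; exact Or.inr ⟨_, hg', hdel⟩
          · rw [gwst_congr S hh Kd j (hst _ (sigma_ne_of_fst hj))]
            exact hval j
        · intro j
          by_cases hj : j = is
          · rw [hj]
            refine RC_step (hd is) ⟨Act.mk ps (hh is) Dir.inp a, ?_, ?_, ?_, ?_⟩
            · rw [dcomp_st_int, dcomp_st_int, sigmaSt_inl S hh Kd hg, sigmaSt_inp S hh Kd hg']
              exact hdel
            · intro p hp
              rw [dcomp_st_ne S hh Kd c' is hp, dcomp_st_ne S hh Kd c is hp]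
              exact congrArg _ (hst _ (sigma_ne_of_snd hp))
            · rw [dcomp_ch, dcomp_ch]; exact hch1
            · intro p pq hpq
              rw [dcomp_ch, dcomp_ch]
              exact hch2 _ _ (pair_ne_lift hpq)
          · rw [dcomp_eq S hh Kd (sigmaSt_congr S hh Kd
                (gwst_congr S hh Kd j (hst _ (sigma_ne_of_fst hj))))
                (fun p hp => hst _ (sigma_ne_of_fst hj))
                (fun p pq => hch2 _ _ (pair_ne_of_fst (sigma_ne_of_fst hj)))]
            exact hd j
        · rw [kcomp_eq S hh Kd ?_ ?_]
          · exact hk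
          · intro j
            by_cases hj : j = is
            · rw [hj]
              rw [kappaSt_inp S hh Kd hg', kappaSt_inl S hh Kd hg]
            · exact kappaSt_congr S hh Kd (gwst_congr S hh Kd j (hst _ (sigma_ne_of_fst hj)))
          · intro j j'
            exact hch2 _ _ (pair_ne_of_fst (sigma_hh_ne hh hshh))
      · -- form 4: output action, contradiction
        rw [Prod.mk.injEq, Prod.mk.injEq] at hx
        obtain ⟨hg, hact, hg'⟩ := hx
        simp at hact
    · -- non-interface input (system renamed `is`)
      rw [mem_delta_loc S hh Kd hpr] at hmem
      obtain ⟨l0, hm0, hlift⟩ := hmem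
      obtain ⟨l0s, l0r, l0d, l0m⟩ := l0
      injection hlift with e1 e2 e3 e4
      subst e3; subst e4
      injection e1 with f1 f2
      subst f1
      have f2' := eq_of_heq f2; subst f2'
      injection e2 with g1 g2
      subst g2
      have hstunch : ∀ j : I, c'.st ⟨j, hh j⟩ = c.st ⟨j, hh j⟩ := by
        intro j
        apply hst
        exact sigma_hh_ne hh hpr
      refine ⟨?_, ?_, ?_⟩
      · intro j
        rw [gwst_congr S hh Kd j (hstunch j)]
        exact hval j
      · intro j
        by_cases hj : j = is
        · rw [hj]
          refine RC_step (hd is) ⟨Act.mk ps pr Dir.inp a, ?_, ?_, ?_, ?_⟩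
          · rw [dcomp_st_ne S hh Kd c' is hpr, dcomp_st_ne S hh Kd c is hpr]
            exact hm0
          · intro p hp
            by_cases hph : p = hh is
            · subst hph
              rw [dcomp_st_int, dcomp_st_int]
              exact sigmaSt_congr S hh Kd (gwst_congr S hh Kd is (hstunch is))
            · rw [dcomp_st_ne S hh Kd c' is hph, dcomp_st_ne S hh Kd c is hph]
              exact congrArg _ (hst _ (sigma_ne_of_snd hp))
          · rw [dcomp_ch, dcomp_ch]; exact hch1
          · intro p pq hpq
            rw [dcomp_ch, dcomp_ch]
            exact hch2 _ _ (pair_ne_lift hpq)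
        · rw [dcomp_eq S hh Kd (sigmaSt_congr S hh Kd
              (gwst_congr S hh Kd j (hstunch j)))
              (fun p hp => hst _ (sigma_ne_of_fst hj))
              (fun p pq => hch2 _ _ (pair_ne_of_fst (sigma_ne_of_fst hj)))]
          exact hd j
      · rw [kcomp_eq S hh Kd
          (fun j => kappaSt_congr S hh Kd (gwst_congr S hh Kd j (hstunch j)))
          (fun j j' => hch2 _ _ (pair_ne_of_snd (sigma_hh_ne hh hpr)))]
        exact hk

end

section
variable {I : Type} {P : I → Type} {A : Type}
variable (S : ∀ i, CS (P i) A) (hh : ∀ i, P i)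
variable (Kd : ∀ i, Set ((S i).St (hh i) × Act I A × (S i).St (hh i)))

lemma Inv_RC (hwf : ∀ i, (S i).WellFormed) {CM : Set (I × A × I)}
    (hK : IsConnPolicy S hh CM Kd)
    {c : Config (MC S hh Kd)} (hc : c ∈ RC (MC S hh Kd)) : MCInv S hh Kd c := by
  have hc' : Relation.ReflTransGen (Step (MC S hh Kd)) (MC S hh Kd).initConfig c := hc
  clear hc
  induction hc' with
  | refl => exact Inv_init S hh Kd
  | tail h1 h2 ih => exact Inv_step S hh Kd hwf hK ih h2

lemma step_of_inr {CM : Set (I × A × I)} (hwf : ∀ i, (S i).WellFormed)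
    (hK : IsConnPolicy S hh CM Kd) {c : Config (MC S hh Kd)} {i : I}
    {t : (S i).St (hh i) × Act (P i) A × (S i).St (hh i)}
    (hg : gwst S hh Kd c i = Sum.inr t) (ht : t ∈ (S i).delta (hh i)) :
    ∃ c', Step (MC S hh Kd) c c' := by
  obtain ⟨q, l0, q'⟩ := t
  obtain ⟨l0s, l0r, l0d, l0m⟩ := l0
  cases l0d
  case out =>
    have hsub : l0s = hh i := (hwf i (hh i) _ ht).1
    subst hsub
    obtain ⟨j, hj, hcm, hkdj⟩ := (hK i).1.2 q l0r l0m q' ht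
    refine exists_step_of_out (T := MC S hh Kd) (c := c)
      (l := Act.mk ⟨i, hh i⟩ ⟨i, l0r⟩ Dir.out l0m) rfl (ofGW S hh i (Sum.inl q')) ?_
    refine (mem_delta_int S hh Kd).mpr ?_
    have hg2 : toGW S hh i (c.st ⟨i, hh i⟩) = Sum.inr (q, Act.mk (hh i) l0r Dir.out l0m, q') := hg
    rw [hg2, toGW_ofGW]
    exact ⟨q, l0m, q', Or.inl ⟨l0r, j, ht, hkdj, Or.inr rfl⟩⟩
  case inp =>
    have hsub : l0r = hh i := (hwf i (hh i) _ ht).1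
    subst hsub
    obtain ⟨j, hj, hcm, hkdj⟩ := (hK i).1.1 q l0s l0m q' ht
    refine exists_step_of_out (T := MC S hh Kd) (c := c)
      (l := Act.mk ⟨i, hh i⟩ ⟨j, hh j⟩ Dir.out l0m) rfl (ofGW S hh i (Sum.inl q')) ?_
    refine (mem_delta_int S hh Kd).mpr ?_
    have hg2 : toGW S hh i (c.st ⟨i, hh i⟩) = Sum.inr (q, Act.mk l0s (hh i) Dir.inp l0m, q') := hg
    rw [hg2, toGW_ofGW]
    exact ⟨q, l0m, q', Or.inr ⟨l0s, j, ht, hkdj, Or.inr rfl⟩⟩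

lemma step_of_dcomp {CM : Set (I × A × I)} (hK : IsConnPolicy S hh CM Kd)
    {c : Config (MC S hh Kd)} {i : I}
    (hinl : gwst S hh Kd c i = Sum.inl (sigmaSt S hh Kd c i))
    {l0 : Act (P i) A} {c1 : Config (S i)}
    (hs : StepL (S i) (dcomp S hh Kd c i) l0 c1)
    (hT2 : l0.dir = Dir.inp ∨ l0.snd ≠ hh i) : ∃ c', Step (MC S hh Kd) c c' := by
  obtain ⟨l0s, l0r, l0d, l0m⟩ := l0
  cases l0d
  case out =>
    have hns : l0s ≠ hh i := by
      rcases hT2 with h | h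
      · simp at h
      · exact h
    obtain ⟨hm, hstX, hchX, _⟩ := hs
    refine exists_step_of_out (T := MC S hh Kd) (c := c)
      (l := Act.mk ⟨i, l0s⟩ ⟨i, l0r⟩ Dir.out l0m) rfl (ofLoc S hh hns (c1.st l0s)) ?_
    refine (mem_delta_loc S hh Kd hns).mpr ?_
    refine ⟨Act.mk l0s l0r Dir.out l0m, ?_, rfl⟩
    rw [toLoc_ofLoc, ← dcomp_st_ne S hh Kd c i hns]
    exact hm
  case inp =>
    by_cases hnr : l0r = hh i
    · subst hnr
      obtain ⟨hm, _, hchX, _⟩ := hs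
      rw [dcomp_st_int] at hm
      obtain ⟨j, hj, hcm, hkdj⟩ := (hK i).1.1 _ l0s l0m _ hm
      refine exists_step_of_inp (T := MC S hh Kd) (c := c)
        (l := Act.mk ⟨i, l0s⟩ ⟨i, hh i⟩ Dir.inp l0m) rfl
        (ofGW S hh i (Sum.inr (sigmaSt S hh Kd c i, Act.mk l0s (hh i) Dir.inp l0m,
          c1.st (hh i)))) ?_ (c1.ch l0s (hh i)) ?_
      · refine (mem_delta_int S hh Kd).mpr ?_
        have hg2 : toGW S hh i (c.st ⟨i, hh i⟩) = Sum.inl (sigmaSt S hh Kd c i) := hinl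
        rw [hg2, toGW_ofGW]
        exact ⟨_, l0m, _, Or.inr ⟨l0s, j, hm, hkdj, Or.inl rfl⟩⟩
      · exact hchX
    · obtain ⟨hm, _, hchX, _⟩ := hs
      refine exists_step_of_inp (T := MC S hh Kd) (c := c)
        (l := Act.mk ⟨i, l0s⟩ ⟨i, l0r⟩ Dir.inp l0m) rfl (ofLoc S hh hnr (c1.st l0r)) ?_
        (c1.ch l0s l0r) ?_
      · refine (mem_delta_loc S hh Kd hnr).mpr ?_
        refine ⟨Act.mk l0s l0r Dir.inp l0m, ?_, rfl⟩
        rw [toLoc_ofLoc, ← dcomp_st_ne S hh Kd c i hnr]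
        exact hm
      · exact hchX

lemma step_of_kstep {CM : Set (I × A × I)} (hK : IsConnPolicy S hh CM Kd)
    {c : Config (MC S hh Kd)}
    (hinl : ∀ i, gwst S hh Kd c i = Sum.inl (sigmaSt S hh Kd c i))
    {l1 : Act I A} {k1 : Config (policyCS S hh Kd)}
    (hs : StepL (policyCS S hh Kd) (kcomp S hh Kd c) l1 k1)
    (hdir : l1.dir = Dir.inp) : ∃ c', Step (MC S hh Kd) c c' := by
  obtain ⟨j, i, l1d, a⟩ := l1
  cases l1d
  case out => simp at hdir
  case inp =>
    obtain ⟨hm, _, hch, _⟩ := hs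
    have hkap : (kcomp S hh Kd c).st i = sigmaSt S hh Kd c i := kappaSt_inl S hh Kd (hinl i)
    rw [hkap] at hm
    rcases Kd_shape S hh Kd hK i hm with ⟨j', b, he, _, _⟩ | ⟨j', b, he, hj', r, hr⟩
    · injection he with g1 g2 g3 g4; simp at g3
    · injection he with g1 g2 g3 g4
      subst g1; subst g4
      refine exists_step_of_inp (T := MC S hh Kd) (c := c)
        (l := Act.mk ⟨j, hh j⟩ ⟨i, hh i⟩ Dir.inp a) rfl
        (ofGW S hh i (Sum.inr (sigmaSt S hh Kd c i, Act.mk (hh i) r Dir.out a, k1.st i))) ?_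
        (k1.ch j i) ?_
      · refine (mem_delta_int S hh Kd).mpr ?_
        have hg2 : toGW S hh i (c.st ⟨i, hh i⟩) = Sum.inl (sigmaSt S hh Kd c i) := hinl i
        rw [hg2, toGW_ofGW]
        exact ⟨_, a, _, Or.inl ⟨r, j, hr, hm, Or.inl rfl⟩⟩
      · exact hch

lemma final_of_final_loc {i : I} {p : P i} (hp : p ≠ hh i) {x : (MC S hh Kd).St ⟨i, p⟩}
    (hf : FinalSt ((S i).delta p) (toLoc S hh hp x)) :
    FinalSt ((MC S hh Kd).delta ⟨i, p⟩) x := by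
  intro l y hmem
  rw [mem_delta_loc S hh Kd hp] at hmem
  obtain ⟨l0, hm0, _⟩ := hmem
  exact hf l0 _ hm0

lemma final_of_final_int {i : I} {x : (MC S hh Kd).St ⟨i, hh i⟩} {q : (S i).St (hh i)}
    (hgx : toGW S hh i x = Sum.inl q)
    (hf : FinalSt ((S i).delta (hh i)) q) :
    FinalSt ((MC S hh Kd).delta ⟨i, hh i⟩) x := by
  intro l y hmem
  rw [mem_delta_int S hh Kd] at hmem
  obtain ⟨q0, a0, q0', hcl⟩ := hmem
  rcases hcl with ⟨s, r, hdel, hkd, hx | hx⟩ | ⟨s, r, hdel, hkd, hx | hx⟩ <;>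
    (have h1 := congrArg Prod.fst hx; rw [hgx] at h1; simp only [] at h1)
  · rw [Sum.inl.injEq] at h1
    subst h1
    exact hf _ _ hdel
  · exact absurd h1 (by simp)
  · rw [Sum.inl.injEq] at h1
    subst h1
    exact hf _ _ hdel
  · exact absurd h1 (by simp)

end


open CFSM in
/-- PaI multicomposition preserves the progress property, provided the
interfaces have no mixed states and the connection policy satisfies progress. -/
theorem progress_preserved_by_multicomposition
    {I : Type} [Finite I] {P : I → Type} [∀ i, Finite (P i)] {A : Type} [Finite A]
    (S : ∀ i, CS (P i) A)
    (hfin : ∀ i p, Finite ((S i).St p))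
    (hwf : ∀ i, (S i).WellFormed)
    (hh : ∀ i, P i)
    (hnomix : ∀ i, NoMixed ((S i).delta (hh i)))
    (CM : Set (I × A × I)) (hCM : IsConnModel S hh CM)
    (Kd : ∀ i, Set ((S i).St (hh i) × Act I A × (S i).St (hh i)))
    (hK : IsConnPolicy S hh CM Kd)
    (hS : ∀ i, ProgressProp (S i))
    (hKfree : ProgressProp (policyCS S hh Kd)) :
    ProgressProp (MC S hh Kd) := by
  intro c hc
  obtain ⟨hval, hdc, hkc⟩ := Inv_RC S hh Kd hwf hK hc
  by_cases hinr : ∃ i t, gwst S hh Kd c i = Sum.inr t ∧ t ∈ (S i).delta (hh i)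
  · obtain ⟨i, t, hg, ht⟩ := hinr
    exact Or.inl (step_of_inr S hh Kd hwf hK hg ht)
  · have hinl : ∀ i, gwst S hh Kd c i = Sum.inl (sigmaSt S hh Kd c i) := by
      intro i
      rcases hval i with ⟨q, hq⟩ | ⟨t, hg, ht⟩
      · rw [hq, sigmaSt_inl S hh Kd hq]
      · exact absurd ⟨i, t, hg, ht⟩ hinr
    by_cases hall : ∀ i p, FinalSt ((S i).delta p) ((dcomp S hh Kd c i).st p)
    · right
      rintro ⟨i, p⟩
      by_cases hp : p = hh i
      · subst hp
        refine final_of_final_int S hh Kd (hinl i) ?_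
        have hfp := hall i (hh i)
        rw [dcomp_st_int] at hfp
        exact hfp
      · refine final_of_final_loc S hh Kd hp ?_
        have hfp := hall i p
        rw [dcomp_st_ne S hh Kd c i hp] at hfp
        exact hfp
    · left
      push_neg at hall
      obtain ⟨i, p, hnf⟩ := hall
      obtain ⟨l0, c1, hs⟩ : ∃ l0 c1, StepL (S i) (dcomp S hh Kd c i) l0 c1 := by
        rcases hS i _ (hdc i) with ⟨c1, l0, hs1⟩ | hfin1
        · exact ⟨l0, c1, hs1⟩
        · exact absurd (hfin1 p) hnf
      obtain ⟨l0s, l0r, l0d, l0m⟩ := l0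
      cases l0d with
      | inp => exact step_of_dcomp S hh Kd hK (hinl i) hs (Or.inl rfl)
      | out =>
        by_cases hsnd : l0s = hh i
        case neg => exact step_of_dcomp S hh Kd hK (hinl i) hs (Or.inr hsnd)
        case pos =>
          subst hsnd
          obtain ⟨hm, _, _, _⟩ := hs
          rw [dcomp_st_int] at hm
          obtain ⟨j, hj, hcm, hkdj⟩ := (hK i).1.2 _ l0r l0m _ hm
          have hknotfin : ¬ ∀ p0, FinalSt ((policyCS S hh Kd).delta p0)
              ((kcomp S hh Kd c).st p0) := by
            intro hf
            have hmem : ((kcomp S hh Kd c).st i, Act.mk j i Dir.inp l0m, c1.st (hh i)) ∈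
                Kd i := by
              rw [kcomp_st, kappaSt_inl S hh Kd (hinl i)]
              exact hkdj
            exact hf i _ _ hmem
          rcases hKfree _ hkc with ⟨k1, l1, hks⟩ | hkfin
          · obtain ⟨l1s, l1r, l1d, l1m⟩ := l1
            cases l1d with
            | inp => exact step_of_kstep S hh Kd hK hinl hks rfl
            | out =>
              obtain ⟨hm1, _, _, _⟩ := hks
              rw [kcomp_st, kappaSt_inl S hh Kd (hinl l1s)] at hm1
              rcases Kd_shape S hh Kd hK l1s hm1 with
                ⟨j2, b2, he2, hj2, r2, hr2⟩ | ⟨j2, b2, he2, hj2, hex⟩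
              · rcases hS l1s _ (hdc l1s) with ⟨c2, l2, hs2⟩ | hfin2
                · obtain ⟨l2s, l2r, l2d, l2m⟩ := l2
                  cases l2d with
                  | inp => exact step_of_dcomp S hh Kd hK (hinl l1s) hs2 (Or.inl rfl)
                  | out =>
                    by_cases hsnd2 : l2s = hh l1s
                    case neg => exact step_of_dcomp S hh Kd hK (hinl l1s) hs2 (Or.inr hsnd2)
                    case pos =>
                      subst hsnd2
                      obtain ⟨hm2, _, _, _⟩ := hs2
                      rw [dcomp_st_int] at hm2
                      exact absurd ⟨⟨_, _, hm2, rfl⟩, ⟨_, _, hr2, rfl⟩⟩ (hnomix l1s _)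
                · have hfin2' := hfin2 (hh l1s)
                  rw [dcomp_st_int] at hfin2'
                  exact absurd hr2 (hfin2' _ _)
              · injection he2 with g1 g2 g3 g4
                simp at g3
          · exact absurd hkfin hknotfin
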